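/- Let κ ∈ ℂ, δ > 0, and let U ⊆ ℂ be a nonempty connected set such that E_κ^p(U) = U for some integer p ≥ 1. Suppose there is a continuous curve g : [0,∞) → ℂ with |g(0) − κ| ≤ δ, Re(g(t)) → +∞ as t → ∞, and sup_t |Im(g(t))| < ∞, such that for every j ≥ 0 the set E_κ^j(U) is disjoint from both the closed disk {w : |w − κ| ≤ δ} and the curve g([0,∞)). Then for every j ≥ 0 the set E_κ^j(U) has bounded imaginary part, and moreover there exists a single S > 0 with |Im(z)| < S for all j ≥ 0 and all z ∈ E_κ^j(U). -/

import Mathlib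

open Filter Complex Set Topology

noncomputable section

/-- Glue two continuous functions at a junction point. -/
lemma glueOn {E : Type*} [TopologicalSpace E] {f g : ℝ → E} {a b c : ℝ}
    (hab : a ≤ b) (hbc : b ≤ c)
    (hf : ContinuousOn f (Icc a b)) (hg : ContinuousOn g (Icc b c)) (hfg : f b = g b) :
    ContinuousOn (fun t => if t ≤ b then f t else g t) (Icc a c) := by
  have h1 : ContinuousOn (fun t => if t ≤ b then f t else g t) (Icc a b) :=
    hf.congr (fun t ht => if_pos ht.2)
  have h2 : ContinuousOn (fun t => if t ≤ b then f t else g t) (Icc b c) := by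
    refine hg.congr (fun t ht => ?_)
    by_cases h : t ≤ b
    · have : t = b := le_antisymm h ht.1
      simp [this, hfg]
    · simp [h]
  intro x hx
  rcases le_or_gt x b with hxb | hxb
  · have c1 := h1 x ⟨hx.1, hxb⟩
    have c2 : ContinuousWithinAt (fun t => if t ≤ b then f t else g t) (Icc b c) x := by
      rcases eq_or_lt_of_le hxb with heq | hlt
      · subst heq; exact h2 x ⟨le_refl _, hx.2⟩
      · apply continuousWithinAt_of_notMem_closure
        rw [isClosed_Icc.closure_eq]
        intro hmem
        exact absurd hmem.1 (not_le.2 hlt)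
    have := c1.union c2
    rwa [Icc_union_Icc_eq_Icc hab hbc] at this
  · have c2 := h2 x ⟨hxb.le, hx.2⟩
    have c1 : ContinuousWithinAt (fun t => if t ≤ b then f t else g t) (Icc a b) x := by
      apply continuousWithinAt_of_notMem_closure
      rw [isClosed_Icc.closure_eq]
      intro hmem
      exact absurd hmem.2 (not_le.2 hxb)
    have := c1.union c2
    rwa [Icc_union_Icc_eq_Icc hab hbc] at this

/-- A continuous function on an interval with values in `2πℤ` is constant. -/
lemma const_of_int_valued {θ : ℝ → ℝ} {a b : ℝ} (hc : ContinuousOn θ (Icc a b))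
    (hint : ∀ t ∈ Icc a b, ∃ k : ℤ, θ t = 2 * Real.pi * k) :
    ∀ t ∈ Icc a b, θ t = θ a := by
  intro t ht
  have hab : a ≤ b := le_trans ht.1 ht.2
  have ha : a ∈ Icc a b := ⟨le_refl _, hab⟩
  by_contra hne
  obtain ⟨k1, hk1⟩ := hint a ha
  obtain ⟨k2, hk2⟩ := hint t ht
  have hpre : IsPreconnected (θ '' Icc a b) := (isPreconnected_Icc).image θ hc
  have hmem1 : θ a ∈ θ '' Icc a b := mem_image_of_mem θ ha
  have hmem2 : θ t ∈ θ '' Icc a b := mem_image_of_mem θ ht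
  have hπ := Real.pi_pos
  have key : ∀ x ∈ θ '' Icc a b, ∃ k : ℤ, x = 2 * Real.pi * k := by
    rintro x ⟨s, hs, rfl⟩; exact hint s hs
  have hk12 : k1 ≠ k2 := by
    intro h; apply hne; rw [hk2, hk1, h]
  -- find a point `2π k + π` in the image
  rcases lt_or_gt_of_ne hk12 with hlt | hlt
  · have : (2 * Real.pi * k1 + Real.pi) ∈ Icc (θ a) (θ t) := by
      constructor
      · rw [hk1]; linarith
      · rw [hk2]
        have : (k1 : ℝ) + 1 ≤ k2 := by exact_mod_cast hlt
        nlinarith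
    obtain ⟨k3, hk3⟩ := key _ (hpre.Icc_subset hmem1 hmem2 this)
    have : (2 : ℝ) * k1 + 1 = 2 * k3 := by
      have := hk3
      nlinarith [Real.pi_pos]
    have : 2 * k1 + 1 = 2 * k3 := by exact_mod_cast this
    omega
  · have : (2 * Real.pi * k2 + Real.pi) ∈ Icc (θ t) (θ a) := by
      constructor
      · rw [hk2]; linarith
      · rw [hk1]
        have : (k2 : ℝ) + 1 ≤ k1 := by exact_mod_cast hlt
        nlinarith
    obtain ⟨k3, hk3⟩ := key _ (hpre.Icc_subset hmem2 hmem1 this)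
    have : (2 : ℝ) * k2 + 1 = 2 * k3 := by
      nlinarith [Real.pi_pos]
    have : 2 * k2 + 1 = 2 * k3 := by exact_mod_cast this
    omega

lemma real_exp_mul_I_eq {x y : ℝ} (h : Complex.exp (x * Complex.I) = Complex.exp (y * Complex.I)) :
    ∃ k : ℤ, x - y = 2 * Real.pi * k := by
  obtain ⟨n, hn⟩ := Complex.exp_eq_exp_iff_exists_int.1 h
  refine ⟨n, ?_⟩
  have h2 : (x : ℂ) * I = (y + n * (2 * Real.pi)) * I := by rw [hn]; ring
  have h3 : (x : ℂ) = y + n * (2 * Real.pi) := mul_right_cancel₀ Complex.I_ne_zero h2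
  have h4 : x = y + n * (2 * Real.pi) := by exact_mod_cast h3
  rw [h4]; ring

lemma re_div_pos_of_abs_lt {z w : ℂ} (hw : w ≠ 0) (h : ‖z - w‖ < ‖w‖) :
    0 < (z / w).re := by
  have hwpos : 0 < ‖w‖ := by
    rwa [norm_pos_iff]
  have h1 : ‖z / w - 1‖ < 1 := by
    have : z / w - 1 = (z - w) / w := by field_simp
    rw [this, norm_div]
    exact (div_lt_one hwpos).2 h
  have h2 : |(z / w - 1).re| ≤ ‖z / w - 1‖ := Complex.abs_re_le_norm _
  have h3 : (z / w).re = 1 + (z / w - 1).re := by simp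
  have := abs_lt.1 (lt_of_le_of_lt h2 h1)
  linarith [this.1]

lemma arglift_mul {v w : ℂ} {θ φ : ℝ}
    (hv : v = (‖v‖ : ℂ) * Complex.exp (θ * Complex.I))
    (hw : w = (‖w‖ : ℂ) * Complex.exp (φ * Complex.I)) :
    v * w = (‖v * w‖ : ℂ) * Complex.exp ((θ + φ : ℝ) * Complex.I) := by
  have hsum : ((θ + φ : ℝ) : ℂ) * Complex.I = θ * Complex.I + φ * Complex.I := by
    push_cast; ring
  rw [norm_mul, hsum, Complex.exp_add]
  push_cast
  conv_lhs => rw [hv, hw]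
  ring

lemma continuousOn_arg_comp {F : ℝ → ℂ} {s : Set ℝ} (hF : ContinuousOn F s)
    (h : ∀ t ∈ s, F t ∈ Complex.slitPlane) : ContinuousOn (fun t => (F t).arg) s :=
  fun t ht => (Complex.continuousAt_arg (h t ht)).comp_continuousWithinAt (hF t ht)

/-- Existence of a continuous logarithm along a path. -/
lemma exists_log_lift {f : ℝ → ℂ} {a b : ℝ} (hab : a ≤ b)
    (hf : ContinuousOn f (Icc a b)) (hne : ∀ t ∈ Icc a b, f t ≠ 0) :
    ∃ ℓ : ℝ → ℂ, ContinuousOn ℓ (Icc a b) ∧ (∀ t ∈ Icc a b, Complex.exp (ℓ t) = f t) ∧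
      ℓ a = Complex.log (f a) := by
  -- minimum modulus
  obtain ⟨s₀, hs₀, hmin⟩ := isCompact_Icc.exists_isMinOn (nonempty_Icc.2 hab)
    (continuous_norm.comp_continuousOn hf)
  set m := ‖f s₀‖ with hm_def
  have hm : 0 < m := by
    rw [hm_def, norm_pos_iff]
    exact hne s₀ hs₀
  have hmin' : ∀ t ∈ Icc a b, m ≤ ‖f t‖ := fun t ht => hmin ht
  -- uniform continuity
  have huc := isCompact_Icc.uniformContinuousOn_of_continuous hf
  rw [Metric.uniformContinuousOn_iff] at huc
  obtain ⟨ε, hε, huc⟩ := huc m hm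
  set h := ε / 2 with hh_def
  have hh : 0 < h := by positivity
  have main : ∀ n : ℕ, ∃ ℓ : ℝ → ℂ, ContinuousOn ℓ (Icc a (min b (a + n * h))) ∧
      (∀ t ∈ Icc a (min b (a + n * h)), Complex.exp (ℓ t) = f t) ∧
      ℓ a = Complex.log (f a) := by
    intro n
    induction n with
    | zero =>
      refine ⟨fun _ => Complex.log (f a), continuousOn_const, ?_, rfl⟩
      intro t ht
      have : min b (a + (0 : ℕ) * h) = a := by
        simp [min_eq_right hab]
      rw [this] at ht
      have : t = a := le_antisymm ht.2 ht.1
      rw [this]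
      exact Complex.exp_log (hne a ⟨le_refl _, hab⟩)
    | succ n ih =>
      obtain ⟨ℓ, hℓc, hℓe, hℓa⟩ := ih
      set c := min b (a + n * h) with hc_def
      set c' := min b (a + (n + 1 : ℕ) * h) with hc'_def
      have hac : a ≤ c := le_min hab (by nlinarith [hh, Nat.cast_nonneg (α := ℝ) n])
      have hcc' : c ≤ c' := by
        apply le_min (min_le_left _ _)
        calc c ≤ a + n * h := min_le_right _ _
          _ ≤ a + (n+1 : ℕ) * h := by
            push_cast
            nlinarith
      have hc'b : c' ≤ b := min_le_left _ _
      have hcb : c ≤ b := min_le_left _ _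
      have hdiff : c' - c ≤ h := by
        rcases le_total b (a + n * h) with hb | hb
        · have h1 : c = b := min_eq_left hb
          have h2 : c' = b := min_eq_left (le_trans hb (by push_cast; nlinarith))
          rw [h1, h2]; linarith
        · have h1 : c = a + n * h := min_eq_right hb
          have h2 : c' ≤ a + (n + 1 : ℕ) * h := min_le_right _ _
          push_cast at h2 ⊢
          rw [h1]
          push_cast
          nlinarith
      have hcmem : c ∈ Icc a b := ⟨hac, hcb⟩
      have hfcne : f c ≠ 0 := hne c hcmem
      have hexpc : Complex.exp (ℓ c) = f c := hℓe c ⟨hac, le_refl _⟩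
      -- second piece
      set g2 : ℝ → ℂ := fun t => ℓ c + Complex.log (f t / f c) with hg2_def
      have hsub : Icc c c' ⊆ Icc a b := fun t ht => ⟨le_trans hac ht.1, le_trans ht.2 hc'b⟩
      have hslit : ∀ t ∈ Icc c c', 0 < (f t / f c).re := by
        intro t ht
        apply re_div_pos_of_abs_lt hfcne
        have hdist : dist t c < ε := by
          rw [Real.dist_eq, _root_.abs_of_nonneg (by linarith [ht.1] : (0:ℝ) ≤ t - c)]
          have h1 := ht.2
          have h2 : t - c ≤ h := by linarith [hdiff]
          linarith
        calc ‖f t - f c‖ = dist (f t) (f c) := by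
              rw [Complex.dist_eq]
          _ < m := huc t (hsub ht) c hcmem hdist
          _ ≤ ‖f c‖ := hmin' c hcmem
      have hg2c : ContinuousOn g2 (Icc c c') := by
        apply ContinuousOn.add continuousOn_const
        have hdivc : ContinuousOn (fun t => f t / f c) (Icc c c') :=
          (hf.mono hsub).div_const _
        exact hdivc.clog (fun t ht => Complex.mem_slitPlane_iff.2 (Or.inl (hslit t ht)))
      have hjun : ℓ c = g2 c := by
        rw [hg2_def]
        simp only [div_self hfcne, Complex.log_one, add_zero]
      refine ⟨fun t => if t ≤ c then ℓ t else g2 t, ?_, ?_, ?_⟩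
      · exact glueOn hac hcc' hℓc hg2c hjun
      · intro t ht
        by_cases htc : t ≤ c
        · simp only [htc, if_pos]
          exact hℓe t ⟨ht.1, htc⟩
        · simp only [htc, if_neg, if_false]
          push_neg at htc
          have htmem : t ∈ Icc c c' := ⟨htc.le, ht.2⟩
          have hftne : f t ≠ 0 := hne t (hsub htmem)
          rw [hg2_def]
          simp only
          rw [Complex.exp_add, hexpc, Complex.exp_log (div_ne_zero hftne hfcne)]
          field_simp
      · simp only [if_pos hac, hℓa]
  -- choose n large enough
  obtain ⟨N, hN⟩ := exists_nat_gt ((b - a) / h)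
  obtain ⟨ℓ, h1, h2, h3⟩ := main N
  have : min b (a + N * h) = b := by
    apply min_eq_left
    have : b - a < N * h := by
      rw [div_lt_iff₀ hh] at hN
      linarith
    linarith
  rw [this] at h1 h2
  exact ⟨ℓ, h1, h2, h3⟩

lemma log_lift_unique {f : ℝ → ℂ} {a b : ℝ} {ℓ₁ ℓ₂ : ℝ → ℂ}
    (h₁ : ContinuousOn ℓ₁ (Icc a b)) (h₂ : ContinuousOn ℓ₂ (Icc a b))
    (he₁ : ∀ t ∈ Icc a b, Complex.exp (ℓ₁ t) = f t)
    (he₂ : ∀ t ∈ Icc a b, Complex.exp (ℓ₂ t) = f t)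
    (ha : ℓ₁ a = ℓ₂ a) : ∀ t ∈ Icc a b, ℓ₁ t = ℓ₂ t := by
  intro t ht
  have hab : a ≤ b := le_trans ht.1 ht.2
  have hkey : ∀ s ∈ Icc a b, ∃ k : ℤ, (ℓ₁ s).im - (ℓ₂ s).im = 2 * Real.pi * k ∧
      (ℓ₁ s).re = (ℓ₂ s).re := by
    intro s hs
    have : Complex.exp (ℓ₁ s) = Complex.exp (ℓ₂ s) := by rw [he₁ s hs, he₂ s hs]
    obtain ⟨n, hn⟩ := Complex.exp_eq_exp_iff_exists_int.1 this
    refine ⟨n, ?_, ?_⟩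
    · have := congrArg Complex.im hn
      simp at this
      rw [this]; ring
    · have := congrArg Complex.re hn
      simpa using this
  have him : ContinuousOn (fun s => (ℓ₁ s).im - (ℓ₂ s).im) (Icc a b) :=
    (Complex.continuous_im.comp_continuousOn h₁).sub
      (Complex.continuous_im.comp_continuousOn h₂)
  have hconst := const_of_int_valued him (fun s hs => ⟨(hkey s hs).choose, (hkey s hs).choose_spec.1⟩)
  have hzero : (ℓ₁ t).im - (ℓ₂ t).im = 0 := by
    rw [hconst t ht, ha]; ring
  apply Complex.ext
  · exact (hkey t ht).choose_spec.2
  · linarith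

/-- Continuous logarithm along a curve defined on `[a, ∞)`. -/
lemma exists_log_lift_Ici {f : ℝ → ℂ} {a : ℝ}
    (hf : ContinuousOn f (Ici a)) (hne : ∀ t ∈ Ici a, f t ≠ 0) :
    ∃ ℓ : ℝ → ℂ, ContinuousOn ℓ (Ici a) ∧ ∀ t ∈ Ici a, Complex.exp (ℓ t) = f t := by
  have hex : ∀ n : ℕ, ∃ ℓ : ℝ → ℂ, ContinuousOn ℓ (Icc a (a + n)) ∧
      (∀ t ∈ Icc a (a + n), Complex.exp (ℓ t) = f t) ∧ ℓ a = Complex.log (f a) := by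
    intro n
    exact exists_log_lift (by linarith [Nat.cast_nonneg (α := ℝ) n])
      (hf.mono (fun t ht => ht.1)) (fun t ht => hne t ht.1)
  choose L hL1 hL2 hL3 using hex
  have agree : ∀ n m : ℕ, n ≤ m → ∀ t ∈ Icc a (a + n), L n t = L m t := by
    intro n m hnm t ht
    have hsub : Icc a (a + (n:ℝ)) ⊆ Icc a (a + (m:ℝ)) :=
      Icc_subset_Icc (le_refl _) (by have : (n:ℝ) ≤ m := Nat.cast_le.2 hnm; linarith)
    exact log_lift_unique (hL1 n) ((hL1 m).mono hsub) (hL2 n)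
      (fun s hs => hL2 m s (hsub hs)) (by rw [hL3 n, hL3 m]) t ht
  refine ⟨fun t => L ⌈t - a⌉₊ t, ?_, ?_⟩
  · intro t ht
    set N := ⌈t - a⌉₊ + 1 with hN_def
    have htN : t < a + N := by
      have h1 : t - a ≤ (⌈t - a⌉₊ : ℝ) := Nat.le_ceil _
      rw [hN_def]
      push_cast
      linarith
    have hmemN : Ici a ∩ Iio (a + (N:ℝ)) ∈ nhdsWithin t (Ici a) :=
      inter_mem_nhdsWithin (Ici a) (Iio_mem_nhds htN)
    have heq : ∀ τ ∈ Ici a ∩ Iio (a + (N:ℝ)), L ⌈τ - a⌉₊ τ = L N τ := by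
      intro τ hτ
      have hτ2 : τ < a + (N:ℝ) := hτ.2
      have h1 : ⌈τ - a⌉₊ ≤ N := Nat.ceil_le.2 (by linarith)
      exact agree _ _ h1 τ ⟨hτ.1, by linarith [Nat.le_ceil (τ - a)]⟩
    have base : ContinuousWithinAt (L N) (Icc a (a + (N:ℝ))) t :=
      hL1 N t ⟨ht, htN.le⟩
    have base2 : ContinuousWithinAt (L N) (Ici a) t := by
      apply base.mono_of_mem_nhdsWithin
      exact Filter.mem_of_superset hmemN (fun τ hτ => ⟨hτ.1, hτ.2.le⟩)
    apply base2.congr_of_eventuallyEq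
    · exact Filter.eventuallyEq_of_mem hmemN heq
    · exact heq t ⟨ht, htN⟩
  · intro t ht
    apply hL2
    exact ⟨ht, by linarith [Nat.le_ceil (t - a)]⟩

/-- `θ` is a continuous argument of `f` along `[a,b]`. -/
def IsArgLift (f : ℝ → ℂ) (a b : ℝ) (θ : ℝ → ℝ) : Prop :=
  ContinuousOn θ (Icc a b) ∧
    ∀ t ∈ Icc a b, f t = (‖f t‖ : ℂ) * Complex.exp (θ t * Complex.I)

/-- `w` is the total argument variation of `f` along `[a,b]`. -/
def Wind (f : ℝ → ℂ) (a b w : ℝ) : Prop :=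
  ∃ θ : ℝ → ℝ, IsArgLift f a b θ ∧ w = θ b - θ a

lemma wind_exists {f : ℝ → ℂ} {a b : ℝ} (hab : a ≤ b)
    (hf : ContinuousOn f (Icc a b)) (hne : ∀ t ∈ Icc a b, f t ≠ 0) :
    ∃ w, Wind f a b w := by
  obtain ⟨ℓ, hc, he, -⟩ := exists_log_lift hab hf hne
  refine ⟨(ℓ b).im - (ℓ a).im, fun t => (ℓ t).im, ⟨Complex.continuous_im.comp_continuousOn hc, ?_⟩, rfl⟩
  intro t ht
  have h1 : Complex.exp (ℓ t) = f t := he t ht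
  have h2 : ‖f t‖ = Real.exp (ℓ t).re := by rw [← h1, Complex.norm_exp]
  rw [h2, ← h1]
  rw [Complex.ofReal_exp]
  rw [← Complex.exp_add]
  congr 1
  exact (Complex.re_add_im (ℓ t)).symm

lemma wind_unique {f : ℝ → ℂ} {a b : ℝ} {w w' : ℝ} (hab : a ≤ b)
    (hne : ∀ t ∈ Icc a b, f t ≠ 0)
    (h1 : Wind f a b w) (h2 : Wind f a b w') : w = w' := by
  obtain ⟨θ, ⟨hθc, hθe⟩, rfl⟩ := h1
  obtain ⟨φ, ⟨hφc, hφe⟩, rfl⟩ := h2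
  have hd : ∀ t ∈ Icc a b, ∃ k : ℤ, θ t - φ t = 2 * Real.pi * k := by
    intro t ht
    apply real_exp_mul_I_eq
    have h3 := hθe t ht
    have h4 := hφe t ht
    have habs : (‖f t‖ : ℂ) ≠ 0 := by
      simp only [ne_eq, Complex.ofReal_eq_zero]
      exact norm_ne_zero_iff.2 (hne t ht)
    have h5 : (‖f t‖ : ℂ) * Complex.exp (θ t * Complex.I)
        = (‖f t‖ : ℂ) * Complex.exp (φ t * Complex.I) := h3.symm.trans h4
    exact mul_left_cancel₀ habs h5
  have hconst := const_of_int_valued (hθc.sub hφc) hd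
  have hb := hconst b ⟨hab, le_refl _⟩
  have := hconst a ⟨le_refl _, hab⟩
  simp only [Pi.sub_apply] at hb
  linarith

/-- The winding of a loop is unchanged as the base point moves along a curve avoiding the loop. -/
lemma wind_const {Λ : ℝ → ℂ} {a b : ℝ} (hab : a ≤ b) (hΛ : ContinuousOn Λ (Icc a b))
    (hloop : Λ a = Λ b) {q : ℝ → ℂ} {u v : ℝ} (huv : u ≤ v) (hq : ContinuousOn q (Icc u v))
    (havoid : ∀ s ∈ Icc a b, ∀ t ∈ Icc u v, Λ s ≠ q t)
    {w w' : ℝ} (hw : Wind (fun s => Λ s - q u) a b w)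
    (hw' : Wind (fun s => Λ s - q v) a b w') :
    w = w' := by
  -- choose a wind value for each t
  have hex : ∀ t : ℝ, ∃ w0, t ∈ Icc u v → Wind (fun s => Λ s - q t) a b w0 := by
    intro t
    by_cases ht : t ∈ Icc u v
    · obtain ⟨w0, hw0⟩ := wind_exists hab (hΛ.sub continuousOn_const)
        (fun s hs => sub_ne_zero.2 (havoid s hs t ht))
      exact ⟨w0, fun _ => hw0⟩
    · exact ⟨0, fun h => absurd h ht⟩
  choose W hW using hex
  have hne : ∀ t ∈ Icc u v, ∀ s ∈ Icc a b, Λ s - q t ≠ 0 :=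
    fun t ht s hs => sub_ne_zero.2 (havoid s hs t ht)
  -- local constancy
  have hloc : ∀ t ∈ Icc u v, ∃ ε > 0, ∀ τ ∈ Icc u v, |τ - t| < ε → W τ = W t := by
    intro t ht
    -- minimum distance from the loop to q t
    obtain ⟨s₀, hs₀, hmin⟩ := isCompact_Icc.exists_isMinOn (nonempty_Icc.2 hab)
      (continuous_norm.comp_continuousOn (hΛ.sub continuousOn_const)
        : ContinuousOn (fun s => ‖Λ s - q t‖) (Icc a b))
    set m := ‖Λ s₀ - q t‖ with hm_def
    have hm : 0 < m := by
      rw [hm_def, norm_pos_iff]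
      exact hne t ht s₀ hs₀
    have hmin' : ∀ s ∈ Icc a b, m ≤ ‖Λ s - q t‖ := fun s hs => hmin hs
    -- continuity of q at t
    have hqc := Metric.continuousWithinAt_iff.1 (hq t ht) m hm
    obtain ⟨ε, hε, hqc⟩ := hqc
    refine ⟨ε, hε, fun τ hτ hτε => ?_⟩
    have hqτ : ‖q τ - q t‖ < m := by
      have := hqc hτ (by rwa [Real.dist_eq])
      rwa [Complex.dist_eq] at this
    -- build a lift for τ from one for t
    obtain ⟨θ, ⟨hθc, hθe⟩, hWt⟩ := (hW t ht : Wind _ a b (W t))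
    set r : ℝ → ℂ := fun s => (Λ s - q τ) / (Λ s - q t) with hr_def
    have hrne : ∀ s ∈ Icc a b, 0 < (r s).re := by
      intro s hs
      apply re_div_pos_of_abs_lt (hne t ht s hs)
      have : (Λ s - q τ) - (Λ s - q t) = q t - q τ := by ring
      rw [this]
      calc ‖q t - q τ‖ = ‖q τ - q t‖ := by
            rw [← norm_neg]; congr 1; ring
        _ < m := hqτ
        _ ≤ ‖Λ s - q t‖ := hmin' s hs
    have hrcont : ContinuousOn r (Icc a b) :=
      (hΛ.sub continuousOn_const).div (hΛ.sub continuousOn_const)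
        (fun s hs => hne t ht s hs)
    have hfact : ∀ s ∈ Icc a b, Λ s - q τ = (Λ s - q t) * r s := by
      intro s hs
      rw [hr_def, mul_comm]
      exact (div_mul_cancel₀ _ (hne t ht s hs)).symm
    have hlift : IsArgLift (fun s => Λ s - q τ) a b (fun s => θ s + (r s).arg) := by
      constructor
      · exact hθc.add (continuousOn_arg_comp hrcont
          (fun s hs => Complex.mem_slitPlane_iff.2 (Or.inl (hrne s hs))))
      · intro s hs
        show Λ s - q τ = (‖Λ s - q τ‖ : ℂ) *
          Complex.exp ((θ s + (r s).arg : ℝ) * Complex.I)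
        rw [hfact s hs]
        exact arglift_mul (hθe s hs) (Complex.norm_mul_exp_arg_mul_I (r s)).symm
    have hWτ' : Wind (fun s => Λ s - q τ) a b
        ((θ b + (r b).arg) - (θ a + (r a).arg)) := ⟨_, hlift, rfl⟩
    have hrab : r a = r b := by
      show (Λ a - q τ) / (Λ a - q t) = (Λ b - q τ) / (Λ b - q t)
      rw [hloop]
    have : W τ = (θ b + (r b).arg) - (θ a + (r a).arg) :=
      wind_unique hab (fun s hs => hne τ hτ s hs) (hW τ hτ) hWτ'
    rw [this, hWt, hrab]
    ring
  -- propagate constancy from u to v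
  have hWv : W v = W u := by
    set S := {t | t ∈ Icc u v ∧ W t = W u} with hS_def
    have hSne : S.Nonempty := ⟨u, ⟨le_refl _, huv⟩, rfl⟩
    have hSbd : BddAbove S := ⟨v, fun t ht => ht.1.2⟩
    set T := sSup S with hT_def
    have hTu : u ≤ T := le_csSup hSbd ⟨⟨le_refl _, huv⟩, rfl⟩
    have hTv : T ≤ v := csSup_le hSne (fun t ht => ht.1.2)
    have hT : T ∈ Icc u v := ⟨hTu, hTv⟩
    obtain ⟨ε, hε, hloc'⟩ := hloc T hT
    have hWT : W T = W u := by
      obtain ⟨τ, hτS, hτ⟩ := exists_lt_of_lt_csSup hSne (by linarith : T - ε < T)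
      have hτT : τ ≤ T := le_csSup hSbd hτS
      have h1 : W τ = W T := hloc' τ hτS.1 (by rw [abs_lt]; constructor <;> linarith)
      rw [← h1, hτS.2]
    rcases eq_or_lt_of_le hTv with heq | hlt
    · rw [← heq, hWT]
    · exfalso
      set τ' := min v (T + ε / 2) with hτ'_def
      have hτ'1 : T < τ' := lt_min hlt (by linarith)
      have hτ'2 : τ' ∈ Icc u v := ⟨le_trans hTu hτ'1.le, min_le_left _ _⟩
      have hτ'3 : |τ' - T| < ε := by
        rw [abs_lt]
        constructor
        · linarith
        · have : τ' ≤ T + ε / 2 := min_le_right _ _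
          linarith
      have : W τ' = W u := by rw [hloc' τ' hτ'2 hτ'3, hWT]
      have : τ' ≤ T := le_csSup hSbd ⟨hτ'2, this⟩
      linarith
  have h1 : w = W u := wind_unique hab (fun s hs => hne u ⟨le_refl _, huv⟩ s hs) hw
    (hW u ⟨le_refl _, huv⟩)
  have h2 : w' = W v := wind_unique hab (fun s hs => hne v ⟨huv, le_refl _⟩ s hs) hw'
    (hW v ⟨huv, le_refl _⟩)
  rw [h1, h2, hWv]

/-- A loop contained in a ball does not wind around far points. -/
lemma wind_zero_far {Λ : ℝ → ℂ} {a b : ℝ} (hab : a ≤ b) (hΛ : ContinuousOn Λ (Icc a b))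
    (hloop : Λ a = Λ b) {q : ℂ} (hfar : ∀ s ∈ Icc a b, ‖Λ s‖ < ‖q‖)
    {w : ℝ} (hw : Wind (fun s => Λ s - q) a b w) : w = 0 := by
  have hq : q ≠ 0 := by
    intro h
    have h1 := hfar a ⟨le_refl _, hab⟩
    rw [h, norm_zero] at h1
    exact absurd h1 (norm_nonneg _).not_gt
  have hne : ∀ s ∈ Icc a b, Λ s - q ≠ 0 := by
    intro s hs h
    rw [sub_eq_zero] at h
    have := hfar s hs
    rw [h] at this
    exact lt_irrefl _ this
  set r : ℝ → ℂ := fun s => (q - Λ s) / q with hr_def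
  have hrpos : ∀ s ∈ Icc a b, 0 < (r s).re := by
    intro s hs
    apply re_div_pos_of_abs_lt hq
    have : q - Λ s - q = -(Λ s) := by ring
    rw [this, norm_neg]
    exact hfar s hs
  have hfact : ∀ s, Λ s - q = -q * r s := by
    intro s
    rw [hr_def]
    field_simp
    ring
  have hrcont : ContinuousOn r (Icc a b) :=
    (continuousOn_const.sub hΛ).div_const _
  have hlift : IsArgLift (fun s => Λ s - q) a b (fun s => (-q).arg + (r s).arg) := by
    constructor
    · exact continuousOn_const.add (continuousOn_arg_comp hrcont
        (fun s hs => Complex.mem_slitPlane_iff.2 (Or.inl (hrpos s hs))))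
    · intro s hs
      show Λ s - q = (‖Λ s - q‖ : ℂ) *
        Complex.exp (((-q).arg + (r s).arg : ℝ) * Complex.I)
      rw [hfact s]
      exact arglift_mul (Complex.norm_mul_exp_arg_mul_I (-q)).symm
        (Complex.norm_mul_exp_arg_mul_I (r s)).symm
  have hrab : r a = r b := by
    show (q - Λ a) / q = (q - Λ b) / q
    rw [hloop]
  have h0 : Wind (fun s => Λ s - q) a b 0 := by
    refine ⟨_, hlift, ?_⟩
    rw [hrab]
    ring
  exact wind_unique hab hne hw h0

lemma no_crossing {c A1 A2 t0 : ℝ} {lam : ℝ → ℂ}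
    (hlamc : ContinuousOn lam (Ici t0))
    (hlam0 : (lam t0).re ≤ c)
    (hlamre : ∀ t ∈ Ici t0, c ≤ (lam t).re)
    (hlamim : ∀ t ∈ Ici t0, A1 ≤ (lam t).im ∧ (lam t).im ≤ A2)
    (hlamtop : Tendsto (fun t => (lam t).re) atTop atTop)
    {γ : ℝ → ℂ} (hγ : Continuous γ)
    (hγre : ∀ s ∈ Icc (0:ℝ) 1, c < (γ s).re)
    (havoid : ∀ s ∈ Icc (0:ℝ) 1, ∀ t ∈ Ici t0, γ s ≠ lam t)
    (h0 : (γ 0).im < A1) (h1 : A2 < (γ 1).im) : False := by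
  have ht0 : t0 ∈ Ici t0 := mem_Ici.2 (le_refl _)
  set q : ℂ := lam t0 with hq_def
  have hqre : q.re = c := le_antisymm hlam0 (hlamre t0 ht0)
  have hqim1 : A1 ≤ q.im := (hlamim t0 ht0).1
  have hqim2 : q.im ≤ A2 := (hlamim t0 ht0).2
  set z : ℂ := γ 0 with hz_def
  set z' : ℂ := γ 1 with hz'_def
  set xs : ℝ := c - 1 with hxs_def
  set seg2 : ℝ → ℂ := fun s => (((2 - s) * z'.re + (s - 1) * xs : ℝ) : ℂ) + (z'.im : ℝ) * Complex.I with hseg2_def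
  set seg3 : ℝ → ℂ := fun s => ((xs : ℝ) : ℂ) + (((3 - s) * z'.im + (s - 2) * z.im : ℝ) : ℂ) * Complex.I with hseg3_def
  set seg4 : ℝ → ℂ := fun s => (((4 - s) * xs + (s - 3) * z.re : ℝ) : ℂ) + (z.im : ℝ) * Complex.I with hseg4_def
  have hseg2re : ∀ s : ℝ, (seg2 s).re = (2 - s) * z'.re + (s - 1) * xs := by
    intro s; simp [hseg2_def]
  have hseg2im : ∀ s : ℝ, (seg2 s).im = z'.im := by
    intro s; simp [hseg2_def]
  have hseg3re : ∀ s : ℝ, (seg3 s).re = xs := by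
    intro s; simp [hseg3_def]
  have hseg3im : ∀ s : ℝ, (seg3 s).im = (3 - s) * z'.im + (s - 2) * z.im := by
    intro s; simp [hseg3_def]
  have hseg4re : ∀ s : ℝ, (seg4 s).re = (4 - s) * xs + (s - 3) * z.re := by
    intro s; simp [hseg4_def]
  have hseg4im : ∀ s : ℝ, (seg4 s).im = z.im := by
    intro s; simp [hseg4_def]
  have hseg2cont : Continuous seg2 := by rw [hseg2_def]; fun_prop
  have hseg3cont : Continuous seg3 := by rw [hseg3_def]; fun_prop
  have hseg4cont : Continuous seg4 := by rw [hseg4_def]; fun_prop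
  have hseg2one : seg2 1 = z' := by
    apply Complex.ext
    · rw [hseg2re]; ring
    · rw [hseg2im]
  have hseg2two : seg2 2 = seg3 2 := by
    apply Complex.ext
    · rw [hseg2re, hseg3re]; ring
    · rw [hseg2im, hseg3im]; ring
  have hseg3three : seg3 3 = seg4 3 := by
    apply Complex.ext
    · rw [hseg3re, hseg4re]; ring
    · rw [hseg3im, hseg4im]; ring
  set inner1 : ℝ → ℂ := fun s => if s ≤ 1 then γ s else seg2 s with hinner1_def
  set inner2 : ℝ → ℂ := fun s => if s ≤ 2 then inner1 s else seg3 s with hinner2_def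
  set Λ : ℝ → ℂ := fun s => if s ≤ 3 then inner2 s else seg4 s with hΛ_def
  have hΛeq1 : ∀ s : ℝ, s ≤ 1 → Λ s = γ s := by
    intro s hs
    simp only [hΛ_def, hinner2_def, hinner1_def]
    rw [if_pos (by linarith), if_pos (by linarith), if_pos hs]
  have hΛeq2 : ∀ s : ℝ, 1 < s → s ≤ 2 → Λ s = seg2 s := by
    intro s hs1 hs2
    simp only [hΛ_def, hinner2_def, hinner1_def]
    rw [if_pos (by linarith), if_pos hs2, if_neg (by linarith)]
  have hΛeq3 : ∀ s : ℝ, 2 < s → s ≤ 3 → Λ s = seg3 s := by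
    intro s hs1 hs2
    simp only [hΛ_def, hinner2_def]
    rw [if_pos hs2, if_neg (by linarith)]
  have hΛeq4 : ∀ s : ℝ, 3 < s → Λ s = seg4 s := by
    intro s hs
    simp only [hΛ_def]
    rw [if_neg (by linarith)]
  have hΛ0 : Λ 0 = z := by rw [hΛeq1 0 (by norm_num), hz_def]
  have hΛ4 : Λ 4 = z := by
    rw [hΛeq4 4 (by norm_num)]
    apply Complex.ext
    · rw [hseg4re]; ring
    · rw [hseg4im]
  have hloop : Λ 0 = Λ 4 := by rw [hΛ0, hΛ4]
  have hinner1cont : ContinuousOn inner1 (Icc 0 2) := by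
    rw [hinner1_def]
    exact glueOn (by norm_num) (by norm_num) hγ.continuousOn hseg2cont.continuousOn
      (by rw [hseg2one, hz'_def])
  have hinner2cont : ContinuousOn inner2 (Icc 0 3) := by
    rw [hinner2_def]
    refine glueOn (by norm_num) (by norm_num) hinner1cont hseg3cont.continuousOn ?_
    simp only [hinner1_def]
    rw [if_neg (by norm_num : ¬(2:ℝ) ≤ 1)]
    exact hseg2two
  have hΛcont : ContinuousOn Λ (Icc 0 4) := by
    rw [hΛ_def]
    refine glueOn (by norm_num) (by norm_num) hinner2cont hseg4cont.continuousOn ?_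
    simp only [hinner2_def]
    rw [if_neg (by norm_num : ¬(3:ℝ) ≤ 2)]
    exact hseg3three
  have him12 : ∀ s ∈ Icc (1:ℝ) 2, (Λ s).im = z'.im := by
    intro s hs
    rcases eq_or_lt_of_le hs.1 with heq | hlt
    · rw [hΛeq1 s (le_of_eq heq.symm), ← heq, hz'_def]
    · rw [hΛeq2 s hlt hs.2, hseg2im]
  have hre23 : ∀ s ∈ Icc (2:ℝ) 3, (Λ s).re = xs := by
    intro s hs
    rcases eq_or_lt_of_le hs.1 with heq | hlt
    · rw [← heq, hΛeq2 2 (by norm_num) (by norm_num), hseg2re]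
      ring
    · rw [hΛeq3 s hlt hs.2, hseg3re]
  have him34 : ∀ s ∈ Icc (3:ℝ) 4, (Λ s).im = z.im := by
    intro s hs
    rcases eq_or_lt_of_le hs.1 with heq | hlt
    · rw [← heq, hΛeq3 3 (by norm_num) (by norm_num), hseg3im]
      ring
    · rw [hΛeq4 s hlt, hseg4im]
  have havoidΛ : ∀ s ∈ Icc (0:ℝ) 4, ∀ t ∈ Ici t0, Λ s ≠ lam t := by
    intro s hs t ht heq
    rcases le_or_gt s 1 with h1' | h1'
    · exact havoid s ⟨hs.1, h1'⟩ t ht (by rw [← hΛeq1 s h1', heq])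
    · rcases le_or_gt s 2 with h2' | h2'
      · have him := him12 s ⟨h1'.le, h2'⟩
        rw [heq] at him
        have := (hlamim t ht).2
        linarith
      · rcases le_or_gt s 3 with h3' | h3'
        · have hre := hre23 s ⟨h2'.le, h3'⟩
          rw [heq] at hre
          have := hlamre t ht
          linarith [hxs_def]
        · have him := him34 s ⟨h3'.le, hs.2⟩
          rw [heq] at him
          have := (hlamim t ht).1
          linarith
  set θ : ℝ → ℝ := fun s => if s ≤ 2 then (Λ s - q).arg
    else if s ≤ 3 then Real.pi + (q - Λ s).arg else 2 * Real.pi + (Λ s - q).arg with hθ_def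
  have hgood02 : ∀ s ∈ Icc (0:ℝ) 2, Λ s - q ∈ Complex.slitPlane := by
    intro s hs
    rcases le_or_gt s 1 with h1' | h1'
    · apply Complex.mem_slitPlane_iff.2 (Or.inl ?_)
      rw [hΛeq1 s h1']
      have := hγre s ⟨hs.1, h1'⟩
      simp only [Complex.sub_re]
      linarith
    · apply Complex.mem_slitPlane_iff.2 (Or.inr ?_)
      have him := him12 s ⟨h1'.le, hs.2⟩
      simp only [Complex.sub_im]
      rw [him]
      intro hcon
      have : z'.im = q.im := by linarith
      linarith
  have hgood23 : ∀ s ∈ Icc (2:ℝ) 3, 0 < (q - Λ s).re := by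
    intro s hs
    simp only [Complex.sub_re]
    rw [hre23 s hs]
    linarith [hxs_def, hqre]
  have hgood34 : ∀ s ∈ Icc (3:ℝ) 4, (Λ s - q).im < 0 := by
    intro s hs
    simp only [Complex.sub_im]
    rw [him34 s hs]
    linarith
  have hθ12cont : ContinuousOn (fun s => (Λ s - q).arg) (Icc 0 2) :=
    continuousOn_arg_comp ((hΛcont.mono (Icc_subset_Icc (le_refl _) (by norm_num))).sub
      continuousOn_const) hgood02
  have hθ23cont : ContinuousOn (fun s => Real.pi + (q - Λ s).arg) (Icc 2 3) :=
    continuousOn_const.add (continuousOn_arg_comp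
      (continuousOn_const.sub (hΛcont.mono (Icc_subset_Icc (by norm_num) (by norm_num))))
      (fun s hs => Complex.mem_slitPlane_iff.2 (Or.inl (hgood23 s hs))))
  have hθ34cont : ContinuousOn (fun s => 2 * Real.pi + (Λ s - q).arg) (Icc 3 4) :=
    continuousOn_const.add (continuousOn_arg_comp
      ((hΛcont.mono (Icc_subset_Icc (by norm_num) (le_refl _))).sub continuousOn_const)
      (fun s hs => Complex.mem_slitPlane_iff.2 (Or.inr (ne_of_lt (hgood34 s hs)))))
  have hjun2 : (Λ 2 - q).arg = Real.pi + (q - Λ 2).arg := by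
    have him : 0 < (Λ 2 - q).im := by
      simp only [Complex.sub_im]
      rw [him12 2 ⟨by norm_num, le_refl _⟩]
      linarith
    have harg := Complex.arg_neg_eq_arg_sub_pi_of_im_pos him
    rw [neg_sub] at harg
    rw [harg]
    ring
  have hjun3 : Real.pi + (q - Λ 3).arg = 2 * Real.pi + (Λ 3 - q).arg := by
    have him : (Λ 3 - q).im < 0 := hgood34 3 ⟨le_refl _, by norm_num⟩
    have harg := Complex.arg_neg_eq_arg_add_pi_of_im_neg him
    rw [neg_sub] at harg
    rw [harg]
    ring
  have hθcont : ContinuousOn θ (Icc 0 4) := by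
    have inner : ContinuousOn (fun s => if s ≤ 2 then (Λ s - q).arg
        else Real.pi + (q - Λ s).arg) (Icc 0 3) :=
      glueOn (by norm_num) (by norm_num) hθ12cont hθ23cont hjun2
    have outer : ContinuousOn (fun s => if s ≤ 3 then
        (if s ≤ 2 then (Λ s - q).arg else Real.pi + (q - Λ s).arg)
        else 2 * Real.pi + (Λ s - q).arg) (Icc 0 4) := by
      refine glueOn (by norm_num) (by norm_num) inner hθ34cont ?_
      rw [if_neg (by norm_num : ¬(3:ℝ) ≤ 2)]
      exact hjun3
    apply outer.congr
    intro s _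
    simp only [hθ_def]
    by_cases h2' : s ≤ 2
    · have h3' : s ≤ 3 := by linarith
      simp [h2', h3']
    · by_cases h3' : s ≤ 3
      · simp [h2', h3']
      · simp [h2', h3']
  have hθlift : ∀ s ∈ Icc (0:ℝ) 4, Λ s - q =
      (‖Λ s - q‖ : ℂ) * Complex.exp ((θ s : ℝ) * Complex.I) := by
    intro s _
    simp only [hθ_def]
    by_cases h2' : s ≤ 2
    · rw [if_pos h2']
      exact (Complex.norm_mul_exp_arg_mul_I (Λ s - q)).symm
    · by_cases h3' : s ≤ 3
      · rw [if_neg h2', if_pos h3']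
        have hcast : ((Real.pi + (q - Λ s).arg : ℝ) : ℂ) * Complex.I
            = ((q - Λ s).arg : ℝ) * Complex.I + Real.pi * Complex.I := by
          push_cast; ring
        rw [hcast, Complex.exp_add, Complex.exp_pi_mul_I]
        have habs : ‖Λ s - q‖ = ‖q - Λ s‖ := by
          rw [← norm_neg (q - Λ s), neg_sub]
        rw [habs]
        have hid := Complex.norm_mul_exp_arg_mul_I (q - Λ s)
        calc Λ s - q = -(q - Λ s) := by ring
          _ = -((‖q - Λ s‖ : ℂ) * Complex.exp ((q - Λ s).arg * Complex.I)) := by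
              rw [hid]
          _ = (‖q - Λ s‖ : ℂ) *
              (Complex.exp ((q - Λ s).arg * Complex.I) * -1) := by ring
      · rw [if_neg h2', if_neg h3']
        have hcast : ((2 * Real.pi + (Λ s - q).arg : ℝ) : ℂ) * Complex.I
            = ((Λ s - q).arg : ℝ) * Complex.I + 2 * Real.pi * Complex.I := by
          push_cast; ring
        rw [hcast, Complex.exp_add, Complex.exp_two_pi_mul_I, mul_one]
        exact (Complex.norm_mul_exp_arg_mul_I (Λ s - q)).symm
  have hW0 : Wind (fun s => Λ s - q) 0 4 (2 * Real.pi) := by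
    refine ⟨θ, ⟨hθcont, hθlift⟩, ?_⟩
    simp only [hθ_def]
    rw [if_neg (by norm_num : ¬(4:ℝ) ≤ 2), if_neg (by norm_num : ¬(4:ℝ) ≤ 3),
      if_pos (by norm_num : (0:ℝ) ≤ 2), hΛ4, hΛ0]
    ring
  obtain ⟨s₁, hs₁, hmax⟩ := isCompact_Icc.exists_isMaxOn (nonempty_Icc.2 (by norm_num : (0:ℝ) ≤ 4))
    (continuous_norm.comp_continuousOn hΛcont)
  set M := ‖Λ s₁‖ with hM_def
  obtain ⟨T, hT⟩ := ((hlamtop.eventually_gt_atTop M).and (eventually_ge_atTop t0)).exists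
  obtain ⟨hT1, hT2⟩ := hT
  have hfar : ∀ s ∈ Icc (0:ℝ) 4, ‖Λ s‖ < ‖lam T‖ := by
    intro s hs
    calc ‖Λ s‖ ≤ M := hmax hs
      _ < (lam T).re := hT1
      _ ≤ ‖lam T‖ := Complex.re_le_norm _
  obtain ⟨wT, hwT⟩ := wind_exists (by norm_num : (0:ℝ) ≤ 4) (hΛcont.sub continuousOn_const)
    (fun s hs => sub_ne_zero.2 (havoidΛ s hs T hT2))
  have hwT0 : wT = 0 := wind_zero_far (by norm_num) hΛcont hloop hfar hwT
  have heqw : 2 * Real.pi = wT := by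
    refine wind_const (by norm_num) hΛcont hloop hT2 (hlamc.mono ?_) ?_ hW0 hwT
    · exact fun t ht => ht.1
    · exact fun s hs t ht => havoidΛ s hs t ht.1
  rw [hwT0] at heqw
  have := Real.pi_pos
  linarith

lemma image_closed {g : ℝ → ℂ} (hgc : ContinuousOn g (Ici 0))
    (hgre : Tendsto (fun t => (g t).re) atTop atTop) : IsClosed (g '' (Ici 0)) := by
  apply IsSeqClosed.isClosed
  intro u x hu hux
  choose t htmem hteq using hu
  obtain ⟨T, hT⟩ := Filter.eventually_atTop.1 (hgre.eventually_ge_atTop (‖x‖ + 1))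
  have hxlim : Tendsto (fun n => ‖u n‖) atTop (𝓝 (‖x‖)) :=
    (continuous_norm.tendsto x).comp hux
  have hev : ∀ᶠ n in atTop, ‖u n‖ < ‖x‖ + 1 :=
    hxlim.eventually_lt_const (by linarith)
  obtain ⟨N, hN⟩ := Filter.eventually_atTop.1 hev
  set T' := max T 0 with hT'_def
  have hbound : ∀ n ≥ N, t n ∈ Icc 0 T' := by
    intro n hn
    refine ⟨htmem n, ?_⟩
    by_contra hcon
    push_neg at hcon
    have h1 : T ≤ t n := le_trans (le_max_left _ _) hcon.le
    have h2 := hT (t n) h1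
    rw [hteq n] at h2
    have h3 : (u n).re ≤ ‖u n‖ := Complex.re_le_norm _
    have := hN n hn
    linarith
  set v : ℕ → ℝ := fun k => t (k + N) with hv_def
  have hvmem : ∀ k, v k ∈ Icc 0 T' := fun k => hbound (k + N) (Nat.le_add_left _ _)
  obtain ⟨τ, hτmem, ψ, hψmono, hψtend⟩ := isCompact_Icc.tendsto_subseq hvmem
  have hτ0 : τ ∈ Ici 0 := hτmem.1
  have hgcont : Tendsto (fun k => g (v (ψ k))) atTop (𝓝 (g τ)) := by
    apply ((hgc τ hτ0).tendsto).comp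
    rw [tendsto_nhdsWithin_iff]
    exact ⟨hψtend, Filter.Eventually.of_forall (fun k => (hvmem (ψ k)).1)⟩
  have hψN : Tendsto (fun k => ψ k + N) atTop atTop :=
    (Filter.tendsto_add_atTop_nat N).comp hψmono.tendsto_atTop
  have husub : Tendsto (fun k => u (ψ k + N)) atTop (𝓝 x) := hux.comp hψN
  have hequ : ∀ k, g (v (ψ k)) = u (ψ k + N) := fun k => hteq (ψ k + N)
  have : Tendsto (fun k => g (v (ψ k))) atTop (𝓝 x) := by
    rw [show (fun k => g (v (ψ k))) = (fun k => u (ψ k + N)) from funext hequ]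
    exact husub
  have hxg : x = g τ := tendsto_nhds_unique this hgcont
  exact ⟨τ, hτ0, hxg.symm⟩

theorem forward_images_have_bdd_im (κ : ℂ) (δ : ℝ) (hδ : 0 < δ)
    (U : Set ℂ) (hUne : U.Nonempty) (hUconn : IsConnected U)
    (p : ℕ) (hp : 1 ≤ p) (hper : (fun z => Complex.exp z + κ)^[p] '' U = U)
    (g : ℝ → ℂ) (hgc : ContinuousOn g (Set.Ici 0))
    (hg0 : ‖g 0 - κ‖ ≤ δ)
    (hgre : Tendsto (fun t => (g t).re) atTop atTop)
    (hgim : ∃ C : ℝ, ∀ t ∈ Set.Ici (0 : ℝ), |(g t).im| ≤ C)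
    (hdisj : ∀ j : ℕ,
      Disjoint ((fun z => Complex.exp z + κ)^[j] '' U)
        ({w : ℂ | ‖w - κ‖ ≤ δ} ∪ g '' Set.Ici (0 : ℝ))) :
    ∃ S > 0, ∀ j : ℕ, ∀ z ∈ (fun z => Complex.exp z + κ)^[j] '' U, |z.im| < S := by
  set E : ℂ → ℂ := fun z => Complex.exp z + κ with hE_def
  have hEc : Continuous E := Complex.continuous_exp.add continuous_const
  set c : ℝ := Real.log δ with hc_def
  have hπ := Real.pi_pos
  -- periodicity of images
  have himE : ∀ j : ℕ, E '' (E^[j] '' U) = E^[j+1] '' U := by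
    intro j
    rw [Function.iterate_succ' E j, Set.image_comp]
  have haux : ∀ k j : ℕ, E^[j + p * k] '' U = E^[j] '' U := by
    intro k
    induction k with
    | zero => intro j; simp
    | succ k ih =>
      intro j
      have h1 : j + p * (k+1) = (j + p * k) + p := by ring
      rw [h1, Function.iterate_add E _ p, Set.image_comp, hper, ih j]
  have hVmod : ∀ j : ℕ, E^[j] '' U = E^[j % p] '' U := by
    intro j
    conv_lhs => rw [← Nat.mod_add_div j p]
    exact haux (j / p) (j % p)
  have hVconn : ∀ j : ℕ, IsConnected (E^[j] '' U) :=
    fun j => hUconn.image _ (hEc.iterate j).continuousOn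
  -- the open set O
  set G : Set ℂ := g '' (Ici 0) with hG_def
  have hGclosed : IsClosed G := image_closed hgc hgre
  set O : Set ℂ := E ⁻¹' ({w : ℂ | δ < ‖w - κ‖} ∩ Gᶜ) with hO_def
  have hOopen : IsOpen O := by
    apply IsOpen.preimage hEc
    apply IsOpen.inter
    · have hh : {w : ℂ | δ < ‖w - κ‖} =
          (fun w => ‖w - κ‖) ⁻¹' (Ioi δ) := rfl
      rw [hh]
      exact IsOpen.preimage (continuous_norm.comp (continuous_id.sub continuous_const)) isOpen_Ioi
    · exact hGclosed.isOpen_compl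
  have hVO : ∀ j : ℕ, E^[j] '' U ⊆ O := by
    intro j y hy
    have hEy : E y ∈ E^[j+1] '' U := by
      rw [← himE j]
      exact mem_image_of_mem E hy
    have hn := Set.disjoint_left.1 (hdisj (j+1)) hEy
    rw [Set.mem_union] at hn
    push_neg at hn
    have h1 : E y ∈ {w : ℂ | δ < ‖w - κ‖} := by
      simp only [Set.mem_setOf_eq]
      exact not_le.1 hn.1
    exact ⟨h1, hn.2⟩
  have hOre : ∀ y ∈ O, c < y.re := by
    intro y hy
    have h1 : δ < ‖E y - κ‖ := hy.1
    have h2 : E y - κ = Complex.exp y := by simp only [hE_def]; ring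
    rw [h2, Complex.norm_exp] at h1
    have h3 := Real.log_lt_log hδ h1
    rwa [Real.log_exp] at h3
  have hOG : ∀ y ∈ O, E y ∉ G := fun y hy => hy.2
  -- construct t0, the last time g is in the disk
  obtain ⟨T₁', hT₁'⟩ := Filter.eventually_atTop.1 (hgre.eventually_ge_atTop (κ.re + δ + 1))
  set T₁ : ℝ := max T₁' 0 with hT₁_def
  have hT₁ : ∀ t ≥ T₁, κ.re + δ + 1 ≤ (g t).re :=
    fun t ht => hT₁' t (le_trans (le_max_left _ _) ht)
  set S0 : Set ℝ := {t | t ∈ Icc 0 T₁ ∧ ‖g t - κ‖ ≤ δ} with hS0_def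
  have hS0closed : IsClosed S0 := by
    have hh : S0 = Icc 0 T₁ ∩ (fun t => ‖g t - κ‖) ⁻¹' (Iic δ) := rfl
    rw [hh]
    apply ContinuousOn.preimage_isClosed_of_isClosed ?_ isClosed_Icc isClosed_Iic
    exact continuous_norm.comp_continuousOn
      ((hgc.mono (fun t ht => ht.1)).sub continuousOn_const)
  have hS0compact : IsCompact S0 :=
    isCompact_Icc.of_isClosed_subset hS0closed (fun t ht => ht.1)
  have hS0ne : S0.Nonempty := ⟨0, ⟨le_refl _, le_max_right _ _⟩, hg0⟩
  set t0 : ℝ := sSup S0 with ht0_def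
  have ht0mem : t0 ∈ S0 := hS0compact.sSup_mem hS0ne
  have ht0pos : 0 ≤ t0 := ht0mem.1.1
  have hafter : ∀ t, t0 < t → δ < ‖g t - κ‖ := by
    intro t ht
    by_contra hcon
    push_neg at hcon
    rcases le_or_gt t T₁ with hle | hlt
    · have hmem : t ∈ S0 := ⟨⟨le_trans ht0pos ht.le, hle⟩, hcon⟩
      have := le_csSup hS0compact.bddAbove hmem
      linarith
    · have h1 := hT₁ t hlt.le
      have h2 : (g t - κ).re ≤ ‖g t - κ‖ := Complex.re_le_norm _
      rw [Complex.sub_re] at h2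
      linarith
  have ht0eq : ‖g t0 - κ‖ = δ := by
    refine le_antisymm ht0mem.2 ?_
    by_contra hcon
    push_neg at hcon
    have hc1 : Tendsto (fun t => ‖g t - κ‖) (𝓝[Ioi t0] t0)
        (𝓝 (‖g t0 - κ‖)) := by
      have base : ContinuousWithinAt (fun t => ‖g t - κ‖) (Ici 0) t0 :=
        (continuous_norm.comp_continuousOn (hgc.sub continuousOn_const)) t0 ht0pos
      exact (base.mono (fun t (ht : t ∈ Ioi t0) => le_trans ht0pos ht.le))
    have hev : ∀ᶠ t in 𝓝[Ioi t0] t0, ‖g t - κ‖ < δ :=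
      hc1.eventually_lt_const hcon
    have hev2 : ∀ᶠ t in 𝓝[Ioi t0] t0, δ < ‖g t - κ‖ :=
      eventually_nhdsWithin_of_forall (fun t ht => hafter t ht)
    obtain ⟨t, h1', h2'⟩ := (hev.and hev2).exists
    linarith
  have hgne : ∀ t ∈ Ici t0, g t - κ ≠ 0 := by
    intro t ht hcon
    rcases eq_or_lt_of_le (mem_Ici.1 ht) with heq | hlt
    · rw [← heq] at hcon
      rw [hcon] at ht0eq
      simp at ht0eq
      linarith
    · have := hafter t hlt
      rw [hcon] at this
      simp at this
      linarith
  have habsge : ∀ t ∈ Ici t0, δ ≤ ‖g t - κ‖ := by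
    intro t ht
    rcases eq_or_lt_of_le (mem_Ici.1 ht) with heq | hlt
    · rw [← heq, ht0eq]
    · exact (hafter t hlt).le
  -- construct the logarithmic lift of g - κ
  have hgct0 : ContinuousOn (fun t => g t - κ) (Ici t0) :=
    (hgc.mono (fun t ht => le_trans ht0pos ht)).sub continuousOn_const
  obtain ⟨lam, hlamc, hlame⟩ := exists_log_lift_Ici hgct0 hgne
  have hrelog : ∀ t ∈ Ici t0, (lam t).re = Real.log (‖g t - κ‖) := by
    intro t ht
    have h1 : ‖g t - κ‖ = Real.exp (lam t).re := by
      rw [← hlame t ht, Complex.norm_exp]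
    rw [h1, Real.log_exp]
  have hlamre : ∀ t ∈ Ici t0, c ≤ (lam t).re := by
    intro t ht
    rw [hrelog t ht, hc_def]
    exact Real.log_le_log hδ (habsge t ht)
  have hlam0 : (lam t0).re = c := by
    rw [hrelog t0 (mem_Ici.2 (le_refl _)), ht0eq, hc_def]
  have hretop : Tendsto (fun t => (lam t).re) atTop atTop := by
    have h1 : Tendsto (fun t => (g t).re - κ.re) atTop atTop :=
      tendsto_atTop_add_const_right atTop (-κ.re) hgre
    have h2 : Tendsto (fun t => ‖g t - κ‖) atTop atTop := by
      apply tendsto_atTop_mono _ h1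
      intro t
      have := Complex.re_le_norm (g t - κ)
      rw [Complex.sub_re] at this
      linarith
    have h3 : Tendsto (fun t => Real.log (‖g t - κ‖)) atTop atTop :=
      Real.tendsto_log_atTop.comp h2
    apply h3.congr'
    filter_upwards [eventually_ge_atTop t0] with t ht
    exact (hrelog t ht).symm
  -- imaginary part bounds for lam
  set T₂ : ℝ := max t0 T₁ with hT₂_def
  have hT₂t0 : t0 ≤ T₂ := le_max_left _ _
  have hgslit : ∀ t ∈ Ici T₂, 0 < (g t - κ).re := by
    intro t ht
    have := hT₁ t (le_trans (le_max_right t0 T₁) ht)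
    rw [Complex.sub_re]
    linarith
  have hlamimcont : ContinuousOn (fun t => (lam t).im) (Icc t0 T₂) :=
    Complex.continuous_im.comp_continuousOn (hlamc.mono (fun t ht => ht.1))
  obtain ⟨b1, hb1mem, hb1⟩ := isCompact_Icc.exists_isMinOn (nonempty_Icc.2 hT₂t0) hlamimcont
  obtain ⟨b2, hb2mem, hb2⟩ := isCompact_Icc.exists_isMaxOn (nonempty_Icc.2 hT₂t0) hlamimcont
  set φ2 : ℝ → ℝ := fun t => (lam t).im - (g t - κ).arg with hφ2_def
  have hφint : ∀ t ∈ Ici T₂, ∃ k : ℤ, φ2 t = 2 * Real.pi * k := by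
    intro t ht
    have ht' : t ∈ Ici t0 := le_trans hT₂t0 ht
    have h1 : Complex.exp (lam t) = g t - κ := hlame t ht'
    have habs : ‖g t - κ‖ = Real.exp (lam t).re := by
      rw [← h1, Complex.norm_exp]
    have hpolar1 : g t - κ =
        (‖g t - κ‖ : ℂ) * Complex.exp (((g t - κ).arg : ℝ) * Complex.I) :=
      (Complex.norm_mul_exp_arg_mul_I _).symm
    have hpolar2 : Complex.exp (lam t) =
        (‖g t - κ‖ : ℂ) * Complex.exp (((lam t).im : ℝ) * Complex.I) := by
      conv_lhs => rw [← Complex.re_add_im (lam t)]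
      rw [Complex.exp_add, habs, Complex.ofReal_exp]
    have hcomb : Complex.exp (((lam t).im : ℝ) * Complex.I)
        = Complex.exp (((g t - κ).arg : ℝ) * Complex.I) := by
      have h2 := hpolar2.symm.trans (h1.trans hpolar1)
      refine mul_left_cancel₀ ?_ h2
      simp only [ne_eq, Complex.ofReal_eq_zero]
      exact norm_ne_zero_iff.2 (hgne t ht')
    exact real_exp_mul_I_eq hcomb
  have hφconst : ∀ t ∈ Ici T₂, φ2 t = φ2 T₂ := by
    intro t ht
    have hφcont : ContinuousOn φ2 (Icc T₂ t) := by
      apply ContinuousOn.sub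
      · exact Complex.continuous_im.comp_continuousOn
          (hlamc.mono (fun s hs => le_trans hT₂t0 hs.1))
      · apply continuousOn_arg_comp
        · exact (hgc.mono (fun s hs => le_trans (le_trans ht0pos hT₂t0) hs.1)).sub
            continuousOn_const
        · exact fun s hs => Complex.mem_slitPlane_iff.2 (Or.inl (hgslit s hs.1))
    exact const_of_int_valued hφcont (fun s hs => hφint s hs.1) t ⟨ht, le_refl _⟩
  set A1 : ℝ := min ((lam b1).im) (-(|φ2 T₂| + Real.pi)) with hA1_def
  set A2 : ℝ := max ((lam b2).im) (|φ2 T₂| + Real.pi) with hA2_def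
  have hlamim : ∀ t ∈ Ici t0, A1 ≤ (lam t).im ∧ (lam t).im ≤ A2 := by
    intro t ht
    rcases le_or_gt t T₂ with hle | hlt
    · constructor
      · refine le_trans (min_le_left _ _) ?_
        have := hb1 (⟨ht, hle⟩ : t ∈ Icc t0 T₂)
        simpa using this
      · refine le_trans ?_ (le_max_left _ _)
        have := hb2 (⟨ht, hle⟩ : t ∈ Icc t0 T₂)
        simpa using this
    · have h1 := hφconst t hlt.le
      have h2 : (lam t).im = φ2 T₂ + (g t - κ).arg := by
        rw [← h1]
        simp only [hφ2_def]
        ring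
      have h3 := abs_le.1 (Complex.abs_arg_le_pi (g t - κ))
      constructor
      · refine le_trans (min_le_right _ _) ?_
        rw [h2]
        have := neg_abs_le (φ2 T₂)
        linarith [h3.1]
      · refine le_trans ?_ (le_max_right _ _)
        rw [h2]
        have := le_abs_self (φ2 T₂)
        linarith [h3.2]
  have hA12 : A1 ≤ A2 :=
    le_trans (hlamim t0 (mem_Ici.2 le_rfl)).1 (hlamim t0 (mem_Ici.2 le_rfl)).2
  set M : ℝ := A2 - A1 + 4 * Real.pi + 1 with hM_def
  have hMpos : 0 < M := by rw [hM_def]; linarith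
  -- key oscillation bound
  have key : ∀ j : ℕ, ∀ z ∈ E^[j] '' U, ∀ z' ∈ E^[j] '' U, z'.im - z.im ≤ M := by
    intro j z hz z' hz'
    by_contra hcon
    push_neg at hcon
    set W : Set ℂ := connectedComponentIn O z with hW_def
    have hVW : E^[j] '' U ⊆ W :=
      (hVconn j).isPreconnected.subset_connectedComponentIn hz (hVO j)
    have hWopen : IsOpen W := hOopen.connectedComponentIn
    have hWconn : IsConnected W := isConnected_connectedComponentIn_iff.2 (hVO j hz)
    have hWpath : IsPathConnected W := (hWopen.isConnected_iff_isPathConnected).1 hWconn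
    obtain ⟨γp, hγp⟩ := hWpath.joinedIn z (hVW hz) z' (hVW hz')
    have hγcont : Continuous γp.extend := γp.continuous_extend
    have hγmem : ∀ s ∈ Icc (0:ℝ) 1, γp.extend s ∈ W := by
      intro s hs
      rw [Path.extend_apply γp hs]
      exact hγp _
    have hWO : W ⊆ O := connectedComponentIn_subset O z
    -- choose the vertical translate
    set F : ℤ := ⌊(z.im - A1) / (2 * Real.pi)⌋ + 2 with hF_def
    have h2πpos : 0 < 2 * Real.pi := by linarith
    have hF1 : ((F : ℝ) - 2) * (2 * Real.pi) ≤ z.im - A1 := by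
      have h := Int.floor_le ((z.im - A1) / (2 * Real.pi))
      have h' := (le_div_iff₀ h2πpos).1 h
      rw [hF_def]
      push_cast
      linarith
    have hF2 : z.im - A1 < ((F : ℝ) - 1) * (2 * Real.pi) := by
      have h := Int.lt_floor_add_one ((z.im - A1) / (2 * Real.pi))
      have h' := (div_lt_iff₀ h2πpos).1 h
      rw [hF_def]
      push_cast
      linarith
    have hn1 : z.im < A1 + 2 * Real.pi * F := by nlinarith
    have hn2 : A2 + 2 * Real.pi * F < z'.im := by nlinarith
    set lamn : ℝ → ℂ := fun t => lam t + ((2 * Real.pi * (F : ℝ) : ℝ) : ℂ) * Complex.I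
      with hlamn_def
    have hlamnre : ∀ t, (lamn t).re = (lam t).re := by
      intro t; simp [hlamn_def]
    have hlamnim : ∀ t, (lamn t).im = (lam t).im + 2 * Real.pi * F := by
      intro t; simp [hlamn_def]
    have hlamnexp : ∀ t ∈ Ici t0, Complex.exp (lamn t) = g t - κ := by
      intro t ht
      simp only [hlamn_def]
      rw [Complex.exp_add, hlame t ht]
      have hh : ((2 * Real.pi * (F:ℝ) : ℝ) : ℂ) * Complex.I
          = (F : ℂ) * (2 * (Real.pi : ℂ) * Complex.I) := by
        push_cast
        ring
      rw [hh, Complex.exp_int_mul_two_pi_mul_I, mul_one]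
    have hγre : ∀ s ∈ Icc (0:ℝ) 1, c < (γp.extend s).re :=
      fun s hs => hOre _ (hWO (hγmem s hs))
    have havoidγ : ∀ s ∈ Icc (0:ℝ) 1, ∀ t ∈ Ici t0, γp.extend s ≠ lamn t := by
      intro s hs t ht hcon2
      have h1 : Complex.exp (γp.extend s) = g t - κ := by
        rw [hcon2]
        exact hlamnexp t ht
      have h2 : E (γp.extend s) = g t := by
        simp only [hE_def]
        rw [h1]
        ring
      have h3 : g t ∈ G := ⟨t, le_trans ht0pos ht, rfl⟩
      rw [← h2] at h3
      exact hOG _ (hWO (hγmem s hs)) h3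
    refine no_crossing (c := c) (A1 := A1 + 2 * Real.pi * F) (A2 := A2 + 2 * Real.pi * F)
      (t0 := t0) (lam := lamn) (γ := γp.extend)
      (hlamc.add continuousOn_const) ?_ ?_ ?_ ?_ hγcont hγre havoidγ ?_ ?_
    · rw [hlamnre t0, hlam0]
    · intro t ht
      rw [hlamnre t]
      exact hlamre t ht
    · intro t ht
      rw [hlamnim t]
      have := hlamim t ht
      constructor <;> linarith [this.1, this.2]
    · apply hretop.congr
      intro t
      rw [hlamnre t]
    · rw [γp.extend_zero]
      exact hn1
    · rw [γp.extend_one]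
      exact hn2
  -- conclusion
  obtain ⟨u0, hu0⟩ := hUne
  set Sb : ℝ := ∑ i ∈ Finset.range p, |(E^[i] u0).im| with hSb_def
  have hSbnn : 0 ≤ Sb := Finset.sum_nonneg (fun i _ => abs_nonneg _)
  refine ⟨Sb + M + 1, by linarith, ?_⟩
  intro j z hz
  have hr : j % p < p := Nat.mod_lt _ (by omega)
  have hz2 : z ∈ E^[j % p] '' U := by rw [← hVmod j]; exact hz
  have hz0 : E^[j % p] u0 ∈ E^[j % p] '' U := mem_image_of_mem _ hu0
  have h1 : z.im - (E^[j % p] u0).im ≤ M := key (j % p) _ hz0 _ hz2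
  have h2 : (E^[j % p] u0).im - z.im ≤ M := key (j % p) _ hz2 _ hz0
  have h3 : |(E^[j % p] u0).im| ≤ Sb :=
    Finset.single_le_sum (fun i _ => abs_nonneg ((E^[i] u0).im)) (Finset.mem_range.2 hr)
  have h4 : |z.im| ≤ |(E^[j % p] u0).im| + M := by
    rw [abs_le]
    constructor
    · have := neg_abs_le (E^[j % p] u0).im
      linarith
    · have := le_abs_self (E^[j % p] u0).im
      linarith
  linarith

end
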